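/- Let k ≥ 4. Then u(k,3) ≤ 2k, i.e., there exists a set of uniqueness for (B^k_3)_+ of cardinality at most 2k. -/

import Mathlib

/-- Number of coordinates of `x ∈ {−1,+1}^k` (encoded as `Fin k → Bool`, `true ↔ +1`)
equal to `+1`. -/
def PosCount {k : ℕ} (x : Fin k → Bool) : ℕ :=
  (Finset.univ.filter fun i => x i = true).card

/-- Walsh function `w_L(x) = ∏_{j ∈ L} x_j` on `{−1,+1}^k`, `true ↔ +1`. -/
noncomputable def Walsh {k : ℕ} (L : Finset (Fin k)) : (Fin k → Bool) → ℝ :=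
  fun x => ∏ j ∈ L, (if x j then (1 : ℝ) else -1)

/-- `B^k_q`: the linear span of the Walsh functions `w_L` with `|L| ≤ q`. -/
noncomputable def BSpace (k q : ℕ) : Submodule ℝ ((Fin k → Bool) → ℝ) :=
  Submodule.span ℝ { f | ∃ L : Finset (Fin k), L.card ≤ q ∧ f = Walsh L }

/-- `(B^k_q)_+`: the nonnegative cone of `B^k_q`. -/
noncomputable def BPlus (k q : ℕ) : Set ((Fin k → Bool) → ℝ) :=
  { φ | φ ∈ BSpace k q ∧ ∀ x, 0 ≤ φ x }

/-- `U` is a set of uniqueness for the class `C`. -/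
def IsUniqSet {k : ℕ} (C : Set ((Fin k → Bool) → ℝ)) (U : Set (Fin k → Bool)) : Prop :=
  ∀ φ ∈ C, (∀ x ∈ U, φ x = 0) → φ = 0

/-- `u(k,q)`: minimal cardinality of a set of uniqueness for `(B^k_q)_+`. -/
noncomputable def uMin (k q : ℕ) : ℕ :=
  sInf { n | ∃ U : Set (Fin k → Bool), U.ncard = n ∧ IsUniqSet (BPlus k q) U }

/-- Level set `W_D`. -/
def LevelSet (k : ℕ) (D : Set ℕ) : Set (Fin k → Bool) :=
  { x | PosCount x ∈ D }

/-- Subcube of `{−1,+1}^k` obtained by fixing the coordinates in `F` to the signs `ε`. -/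
def Subcube {k : ℕ} (F : Finset (Fin k)) (ε : Fin k → Bool) : Set (Fin k → Bool) :=
  { x | ∀ i ∈ F, x i = ε i }

/-- `g(k,q)`: minimal cardinality of a subset of `{−1,+1}^k` meeting every `(k−q)`-subcube. -/
noncomputable def gMin (k q : ℕ) : ℕ :=
  sInf { n | ∃ A : Set (Fin k → Bool), A.ncard = n ∧
    ∀ (F : Finset (Fin k)) (ε : Fin k → Bool), F.card = q → (A ∩ Subcube F ε).Nonempty }

/-- Binomial coefficient `C(n,r)` for integer `r`, with `C(n,r) = 0` for `r < 0` or `r > n`. -/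
def Cb (n : ℕ) (r : ℤ) : ℕ := if r < 0 then 0 else n.choose r.toNat
section aux
variable {k : ℕ}

def eVec (k : ℕ) (i : Fin k) : Fin k → Bool := fun j => decide (j = i)
def fVec (k : ℕ) (i : Fin k) : Fin k → Bool := fun j => !decide (j = i)

lemma walsh_fVec (L : Finset (Fin k)) (i : Fin k) :
    Walsh L (fVec k i) = if i ∈ L then (-1:ℝ) else 1 := by
  unfold Walsh fVec
  have h : ∀ j : Fin k, (if (!decide (j = i)) = true then (1:ℝ) else -1)
      = if j = i then -1 else 1 := by
    intro j; by_cases h : j = i <;> simp [h]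
  simp only [h]
  by_cases hi : i ∈ L
  · rw [← Finset.mul_prod_erase L _ hi, if_pos rfl, if_pos hi,
      Finset.prod_eq_one (fun j hj => if_neg (Finset.ne_of_mem_erase hj)), mul_one]
  · rw [Finset.prod_eq_one, if_neg hi]
    intro j hj
    exact if_neg fun h => hi (by rwa [h] at hj)

lemma walsh_not (L : Finset (Fin k)) (x : Fin k → Bool) :
    Walsh L (fun j => !x j) = (-1:ℝ)^L.card * Walsh L x := by
  unfold Walsh
  rw [← Finset.prod_const (-1:ℝ), ← Finset.prod_mul_distrib]
  refine Finset.prod_congr rfl fun j _ => ?_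
  cases hb : x j <;> simp [hb]

lemma walsh_eVec (L : Finset (Fin k)) (i : Fin k) :
    Walsh L (eVec k i) = (-1:ℝ)^L.card * (if i ∈ L then -1 else 1) := by
  have h : eVec k i = fun j => !(fVec k i j) := by
    funext j; simp [eVec, fVec]
  rw [h, walsh_not, walsh_fVec]

lemma sum_sign (L : Finset (Fin k)) :
    ∑ i : Fin k, (if i ∈ L then (-1:ℝ) else 1) = (k : ℝ) - 2 * L.card := by
  have h : ∀ i : Fin k, (if i ∈ L then (-1:ℝ) else 1)
      = 1 - 2 * (if i ∈ L then (1:ℝ) else 0) := by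
    intro i; by_cases h : i ∈ L <;> simp [h] <;> norm_num
  rw [Finset.sum_congr rfl fun i _ => h i, Finset.sum_sub_distrib, ← Finset.mul_sum]
  simp [Finset.sum_boole, Finset.filter_mem_eq_inter]

lemma walsh_update (L : Finset (Fin k)) (i : Fin k) (hi : i ∈ L) (x : Fin k → Bool) :
    Walsh L (Function.update x i (!x i)) = - Walsh L x := by
  unfold Walsh
  rw [← Finset.mul_prod_erase L _ hi,
    ← Finset.mul_prod_erase L (fun j => if x j then (1:ℝ) else -1) hi]
  have h2 : ∀ j ∈ L.erase i,
      (if Function.update x i (!x i) j then (1:ℝ) else -1) = if x j then 1 else -1 := by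
    intro j hj
    rw [Function.update_of_ne (Finset.ne_of_mem_erase hj)]
  rw [Finset.prod_congr rfl h2, Function.update_self]
  cases x i <;> simp

lemma sum_walsh (L : Finset (Fin k)) :
    ∑ x : Fin k → Bool, Walsh L x = if L = ∅ then (2:ℝ)^k else 0 := by
  by_cases hL : L = ∅
  · rw [if_pos hL]
    subst hL
    simp [Walsh, Finset.card_univ]
  · rw [if_neg hL]
    obtain ⟨i, hi⟩ := Finset.nonempty_iff_ne_empty.2 hL
    refine Finset.sum_ninvolution (fun x => Function.update x i (!x i)) ?_ ?_ (fun _ => Finset.mem_univ _) ?_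
    · intro x
      rw [walsh_update L i hi]; ring
    · intro x _ h
      have h2 := congrFun h i
      simp only [Function.update_self] at h2
      simp at h2
    · intro x
      funext j
      by_cases hj : j = i
      · subst hj; simp
      · simp [Function.update_of_ne hj]

lemma posCount_eVec (i : Fin k) : PosCount (eVec k i) = 1 := by
  unfold PosCount eVec
  rw [show (Finset.univ.filter fun j : Fin k => decide (j = i) = true) = {i} by
    ext j; simp]
  simp

lemma posCount_not (x : Fin k → Bool) : PosCount (fun j => !x j) = k - PosCount x := by
  unfold PosCount
  have h : (Finset.univ.filter fun j : Fin k => (!x j) = true)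
      = (Finset.univ.filter fun j : Fin k => x j = true)ᶜ := by
    ext j; cases hb : x j <;> simp [hb]
  rw [h, Finset.card_compl, Fintype.card_fin]

lemma posCount_fVec (i : Fin k) : PosCount (fVec k i) = k - 1 := by
  have h : fVec k i = fun j => !(eVec k i j) := by
    funext j; simp [eVec, fVec]
  rw [h, posCount_not, posCount_eVec]

lemma eq_eVec_of (x : Fin k → Bool) (h : PosCount x = 1) : ∃ i, x = eVec k i := by
  unfold PosCount at h
  obtain ⟨a, ha⟩ := Finset.card_eq_one.mp h
  have hmem : ∀ j : Fin k, x j = true ↔ j = a := by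
    intro j
    have h2 := Finset.ext_iff.mp ha j
    simpa using h2
  refine ⟨a, funext fun j => ?_⟩
  by_cases hj : j = a
  · rw [show eVec k a j = true by simp [eVec, hj], (hmem j).2 hj]
  · have hx : x j = false := by
      cases hb : x j
      · rfl
      · exact absurd ((hmem j).1 hb) hj
    rw [hx, show eVec k a j = false by simp [eVec, hj]]

lemma eq_fVec_of (x : Fin k → Bool) (hk : 1 ≤ k) (h : PosCount x = k - 1) :
    ∃ i, x = fVec k i := by
  have h1 : PosCount x ≤ k := by
    unfold PosCount
    simpa using Finset.card_le_card (Finset.filter_subset _ (Finset.univ : Finset (Fin k)))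
      |>.trans_eq (by simp)
  have h2 : PosCount (fun j => !x j) = 1 := by
    rw [posCount_not, h]; omega
  obtain ⟨i, hi⟩ := eq_eVec_of _ h2
  refine ⟨i, funext fun j => ?_⟩
  have := congrFun hi j
  have h3 : fVec k i j = !(eVec k i j) := by simp [eVec, fVec]
  rw [h3, ← this, Bool.not_not]

end aux

section main
variable {k : ℕ}

noncomputable def lam (k : ℕ) : (Fin k → Bool) → ℝ := fun x =>
  1 + (if x = (fun _ => true) ∨ x = (fun _ => false) then ((k:ℝ)-4)*2^(k-3) else 0)
    - (if PosCount x = 1 ∨ PosCount x = k-1 then (2:ℝ)^(k-3) else 0)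

def UF (k : ℕ) : Finset (Fin k → Bool) :=
  Finset.univ.filter fun x : Fin k → Bool => PosCount x = 1 ∨ PosCount x = k-1

lemma UF_eq (hk : 4 ≤ k) :
    UF k = Finset.univ.image (eVec k) ∪ Finset.univ.image (fVec k) := by
  ext x
  simp only [UF, Finset.mem_filter, Finset.mem_univ, true_and, Finset.mem_union,
    Finset.mem_image]
  constructor
  · rintro (h | h)
    · obtain ⟨i, rfl⟩ := eq_eVec_of x h
      exact Or.inl ⟨i, rfl⟩
    · obtain ⟨i, rfl⟩ := eq_fVec_of x (by omega) h
      exact Or.inr ⟨i, rfl⟩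
  · rintro (⟨i, rfl⟩ | ⟨i, rfl⟩)
    · exact Or.inl (posCount_eVec i)
    · exact Or.inr (posCount_fVec i)

lemma sum_UF (hk : 4 ≤ k) (L : Finset (Fin k)) :
    ∑ x ∈ UF k, Walsh L x = ((-1:ℝ)^L.card + 1) * ((k:ℝ) - 2*L.card) := by
  have hdisj : Disjoint (Finset.univ.image (eVec k)) (Finset.univ.image (fVec k)) := by
    rw [Finset.disjoint_left]
    rintro x hx hy
    obtain ⟨i, -, rfl⟩ := Finset.mem_image.mp hx
    obtain ⟨j, -, hj⟩ := Finset.mem_image.mp hy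
    have h1 : PosCount (eVec k i) = 1 := posCount_eVec i
    rw [← hj, posCount_fVec] at h1
    omega
  have hinjE : ∀ i ∈ (Finset.univ : Finset (Fin k)), ∀ j ∈ Finset.univ,
      eVec k i = eVec k j → i = j := by
    intro i _ j _ h
    have h2 := congrFun h i
    simpa [eVec] using h2
  have hinjF : ∀ i ∈ (Finset.univ : Finset (Fin k)), ∀ j ∈ Finset.univ,
      fVec k i = fVec k j → i = j := by
    intro i _ j _ h
    have h2 := congrFun h i
    simpa [fVec] using h2
  rw [UF_eq hk, Finset.sum_union hdisj, Finset.sum_image hinjE, Finset.sum_image hinjF]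
  have h1 : ∑ i : Fin k, Walsh L (eVec k i) = (-1:ℝ)^L.card * ((k:ℝ) - 2*L.card) := by
    simp only [walsh_eVec]
    rw [← Finset.mul_sum, sum_sign]
  have h2 : ∑ i : Fin k, Walsh L (fVec k i) = (k:ℝ) - 2*L.card := by
    simp only [walsh_fVec]
    exact sum_sign L
  rw [h1, h2]; ring

lemma lam_orth (hk : 4 ≤ k) (L : Finset (Fin k)) (hL : L.card ≤ 3) :
    ∑ x : Fin k → Bool, lam k x * Walsh L x = 0 := by
  have expand : ∀ x, lam k x * Walsh L x =
      Walsh L x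
      + (if x = (fun _ => true) ∨ x = (fun _ => false)
          then ((k:ℝ)-4)*2^(k-3) * Walsh L x else 0)
      - (if PosCount x = 1 ∨ PosCount x = k-1 then (2:ℝ)^(k-3) * Walsh L x else 0) := by
    intro x
    unfold lam
    split <;> split <;> ring
  rw [Finset.sum_congr rfl fun x _ => expand x, Finset.sum_sub_distrib,
    Finset.sum_add_distrib, sum_walsh, ← Finset.sum_filter, ← Finset.sum_filter]
  have hne : (fun _ : Fin k => true) ≠ (fun _ => false) := by
    intro h
    have := congrFun h ⟨0, by omega⟩
    simp at this
  have hTF : (Finset.univ.filter fun x : Fin k → Bool =>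
      x = (fun _ => true) ∨ x = (fun _ => false))
      = {(fun _ => true), (fun _ => false)} := by
    ext x
    simp [Finset.mem_insert]
  have hUF : (Finset.univ.filter fun x : Fin k → Bool =>
      PosCount x = 1 ∨ PosCount x = k-1) = UF k := rfl
  rw [hTF, hUF, Finset.sum_pair hne]
  have wT : Walsh L (fun _ => true) = 1 := by simp [Walsh]
  have wF : Walsh L (fun _ => false) = (-1:ℝ)^L.card := by simp [Walsh]
  rw [wT, wF, ← Finset.mul_sum, sum_UF hk]
  have hpow : (2:ℝ)^(k-3) * 8 = 2^k := by
    rw [show (8:ℝ) = 2^3 by norm_num, ← pow_add, show k-3+3 = k by omega]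
  have hc : L.card = 0 ∨ L.card = 1 ∨ L.card = 2 ∨ L.card = 3 := by omega
  rcases hc with h | h | h | h
  · rw [if_pos (Finset.card_eq_zero.mp h), h, ← hpow]
    push_cast
    ring
  · have hLne : L ≠ ∅ := by
      intro e; rw [e] at h; simp at h
    rw [if_neg hLne, h]
    push_cast
    ring
  · have hLne : L ≠ ∅ := by
      intro e; rw [e] at h; simp at h
    rw [if_neg hLne, h]
    push_cast
    ring
  · have hLne : L ≠ ∅ := by
      intro e; rw [e] at h; simp at h
    rw [if_neg hLne, h]
    push_cast
    ring

lemma lam_pos (hk : 4 ≤ k) (x : Fin k → Bool)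
    (hx : ¬(PosCount x = 1 ∨ PosCount x = k-1)) : 0 < lam k x := by
  unfold lam
  rw [if_neg hx, sub_zero]
  have h1 : (0:ℝ) ≤ (if x = (fun _ => true) ∨ x = (fun _ => false)
      then ((k:ℝ)-4)*2^(k-3) else 0) := by
    split
    · apply mul_nonneg
      · have h4 : (4:ℝ) ≤ (k:ℝ) := by exact_mod_cast hk
        linarith
      · positivity
    · exact le_refl _
  linarith

end main

/-- For `k ≥ 4`, `u(k,3) ≤ 2k`, i.e., there is a set of uniqueness for
`(B^k_3)_+` of cardinality at most `2k`. -/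
theorem stmt_3 (k : ℕ) (hk : 4 ≤ k) :
    uMin k 3 ≤ 2 * k ∧
      ∃ U : Set (Fin k → Bool), U.ncard ≤ 2 * k ∧ IsUniqSet (BPlus k 3) U := by
  classical
  set U : Set (Fin k → Bool) := {x | PosCount x = 1 ∨ PosCount x = k-1} with hUdef
  have hcoe : U = ↑(UF k) := by
    ext x
    simp [UF, hUdef]
  have hUcard : U.ncard ≤ 2*k := by
    rw [hcoe, Set.ncard_coe_finset, UF_eq hk]
    calc (Finset.univ.image (eVec k) ∪ Finset.univ.image (fVec k)).card
        ≤ (Finset.univ.image (eVec k)).card + (Finset.univ.image (fVec k)).card :=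
          Finset.card_union_le _ _
      _ ≤ k + k := by
          apply add_le_add
          · exact le_trans Finset.card_image_le (by simp)
          · exact le_trans Finset.card_image_le (by simp)
      _ = 2*k := by ring
  have hUniq : IsUniqSet (BPlus k 3) U := by
    rintro φ ⟨hspan, hpos⟩ hz
    have hzx : ∀ x : Fin k → Bool, (PosCount x = 1 ∨ PosCount x = k-1) → φ x = 0 := by
      intro x hx
      exact hz x hx
    have hsum : ∑ x : Fin k → Bool, lam k x * φ x = 0 := by
      let Λ : ((Fin k → Bool) → ℝ) →ₗ[ℝ] ℝ :=
        { toFun := fun ψ => ∑ x : Fin k → Bool, lam k x * ψ x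
          map_add' := fun a b => by
            simp [mul_add, Finset.sum_add_distrib]
          map_smul' := fun c a => by
            simp only [Pi.smul_apply, smul_eq_mul, RingHom.id_apply, Finset.mul_sum]
            exact Finset.sum_congr rfl fun x _ => by ring }
      have hle : BSpace k 3 ≤ LinearMap.ker Λ := by
        rw [BSpace, Submodule.span_le]
        rintro f ⟨L, hL, rfl⟩
        exact LinearMap.mem_ker.mpr (lam_orth hk L hL)
      exact LinearMap.mem_ker.mp (hle hspan)
    have hterm : ∀ x ∈ (Finset.univ : Finset (Fin k → Bool)), (0:ℝ) ≤ lam k x * φ x := by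
      intro x _
      by_cases hx : PosCount x = 1 ∨ PosCount x = k-1
      · rw [hzx x hx, mul_zero]
      · exact mul_nonneg (le_of_lt (lam_pos hk x hx)) (hpos x)
    have hall := (Finset.sum_eq_zero_iff_of_nonneg hterm).mp hsum
    funext x
    show φ x = 0
    by_cases hx : PosCount x = 1 ∨ PosCount x = k-1
    · exact hzx x hx
    · have h0 := hall x (Finset.mem_univ x)
      exact (mul_eq_zero.mp h0).resolve_left (ne_of_gt (lam_pos hk x hx))
  refine ⟨le_trans (Nat.sInf_le ⟨U, rfl, hUniq⟩) hUcard, U, hUcard, hUniq⟩
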